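/- arXiv:2203.13189 — 4 statements merged into one kernel-verified Lean document; each statement's English description precedes it below -/
import Mathlib

section
/- Let A be a module over the localization ℤ_(2) (equivalently, an abelian group on which multiplication by every odd integer is invertible), and let t : ℤ → A be a function satisfying: (i) t j = k • t (k*j) for all nonzero integers j and all odd nonzero integers k; (ii) 2 • t 0 = 0; (iii) for every integer i ≥ 0, t(1+i) + t(2+i) + t(3+i) + t(6+i) + t(-1+i) + t(-2+i) + t(-3+i) + t(-6+i) = 8 • t i. Then 16 • t 1 = 0. -/
theorem stmt_0 (A : Type*) [AddCommGroup A]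
    (hloc : ∀ k : ℤ, Odd k → Function.Bijective (fun a : A => k • a))
    (t : ℤ → A)
    (h1 : ∀ j k : ℤ, j ≠ 0 → k ≠ 0 → Odd k → t j = k • t (k * j))
    (h2 : (2 : ℤ) • t 0 = 0)
    (h3 : ∀ i : ℤ, 0 ≤ i → t (1+i) + t (2+i) + t (3+i) + t (6+i) + t (-1+i) + t (-2+i) + t (-3+i) + t (-6+i) = (8:ℤ) • t i) :
    (16:ℤ) • t 1 = 0 := by
  have hneg : ∀ n : ℤ, n ≠ 0 → t n = - t (-n) := by
    intro n hn
    have := h1 n (-1) hn (by norm_num) ⟨-1, by ring⟩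
    simpa using this
  have hodd : ∀ j k : ℤ, j ≠ 0 → k ≠ 0 → Odd k → t j = k • t (k * j) := h1
  have r1 := h3 1 (by norm_num)
  have r2 := h3 2 (by norm_num)
  have r3 := h3 3 (by norm_num)
  have r5 := h3 5 (by norm_num)
  have r9 := h3 9 (by norm_num)
  norm_num at r1 r2 r3 r5 r9
  have n1 := hneg 1 (by norm_num)
  have n2 := hneg 2 (by norm_num)
  have n3 := hneg 3 (by norm_num)
  have n4 := hneg 4 (by norm_num)
  have n5 := hneg 5 (by norm_num)
  norm_num at n1 n2 n3 n4 n5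
  have o13 := hodd 1 3 (by norm_num) (by norm_num) (by decide)
  have o15 := hodd 1 5 (by norm_num) (by norm_num) (by decide)
  have o17 := hodd 1 7 (by norm_num) (by norm_num) (by decide)
  have o19 := hodd 1 9 (by norm_num) (by norm_num) (by decide)
  have o111 := hodd 1 11 (by norm_num) (by norm_num) (by decide)
  have o115 := hodd 1 15 (by norm_num) (by norm_num) (by decide)
  have o23 := hodd 2 3 (by norm_num) (by norm_num) (by decide)
  have o25 := hodd 2 5 (by norm_num) (by norm_num) (by decide)
  have o43 := hodd 4 3 (by norm_num) (by norm_num) (by decide)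
  norm_num at o13 o15 o17 o19 o111 o115 o23 o25 o43
  have key : (46061 : ℤ) • ((16:ℤ) • t 1) = (46061 : ℤ) • (0 : A) := by
    linear_combination (norm := module)
      (-107415 : ℤ) • r1 + (17325 : ℤ) • r2 + (90090 : ℤ) • r3 +
      (34650 : ℤ) • r5 + (-51975 : ℤ) • r9 +
      (55440 : ℤ) • n1 + (107415 : ℤ) • n2 + (-90090 : ℤ) • n3 +
      (-17325 : ℤ) • n4 + (107415 : ℤ) • n5 +
      (-306075 : ℤ) • o13 + (-12474 : ℤ) • o15 + (-17820 : ℤ) • o17 +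
      (56210 : ℤ) • o19 + (-1575 : ℤ) • o111 + (-3465 : ℤ) • o115 +
      (24255 : ℤ) • o23 + (-10395 : ℤ) • o25 + (-17325 : ℤ) • o43
  have := (hloc 46061 ⟨23030, by norm_num⟩).1 key
  simpa using this
end

section
/- Let A be a module over ℤ_(2) and t : ℤ → A a function satisfying: (i) t j = k • t (k*j) for all nonzero integers j and all odd nonzero k; (ii) 2 • t 0 = 0; (iii) for every integer i ≥ 0, t(1+i) + t(2+i) + t(3+i) + t(6+i) + t(-1+i) + t(-2+i) + t(-3+i) + t(-6+i) = 8 • t i. Then t 4 = 4 • t 1 + t 0 and 16 • t 2 = 0. -/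
theorem stmt_1 (A : Type*) [AddCommGroup A]
    (hloc : ∀ k : ℤ, Odd k → Function.Bijective (fun a : A => k • a))
    (t : ℤ → A)
    (h1 : ∀ j k : ℤ, j ≠ 0 → k ≠ 0 → Odd k → t j = k • t (k * j))
    (h2 : (2 : ℤ) • t 0 = 0)
    (h3 : ∀ i : ℤ, 0 ≤ i → t (1+i) + t (2+i) + t (3+i) + t (6+i) + t (-1+i) + t (-2+i) + t (-3+i) + t (-6+i) = (8:ℤ) • t i) :
    t 4 = (4:ℤ) • t 1 + t 0 ∧ (16:ℤ) • t 2 = 0 := by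
  have N1 : t (1:ℤ) = -t (-1) := by
    have h := h1 1 (-1) (by norm_num) (by norm_num) (by decide)
    norm_num at h; exact h
  have N2 : t (2:ℤ) = -t (-2) := by
    have h := h1 2 (-1) (by norm_num) (by norm_num) (by decide)
    norm_num at h; exact h
  have N3 : t (3:ℤ) = -t (-3) := by
    have h := h1 3 (-1) (by norm_num) (by norm_num) (by decide)
    norm_num at h; exact h
  have N4 : t (4:ℤ) = -t (-4) := by
    have h := h1 4 (-1) (by norm_num) (by norm_num) (by decide)
    norm_num at h; exact h
  have N5 : t (5:ℤ) = -t (-5) := by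
    have h := h1 5 (-1) (by norm_num) (by norm_num) (by decide)
    norm_num at h; exact h
  have N6 : t (6:ℤ) = -t (-6) := by
    have h := h1 6 (-1) (by norm_num) (by norm_num) (by decide)
    norm_num at h; exact h
  have O1_11 : t (1:ℤ) = (11:ℤ) • t 11 := by
    have h := h1 1 11 (by norm_num) (by norm_num) (by decide)
    norm_num at h; exact h
  have O1_13 : t (1:ℤ) = (13:ℤ) • t 13 := by
    have h := h1 1 13 (by norm_num) (by norm_num) (by decide)
    norm_num at h; exact h
  have O1_15 : t (1:ℤ) = (15:ℤ) • t 15 := by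
    have h := h1 1 15 (by norm_num) (by norm_num) (by decide)
    norm_num at h; exact h
  have O1_3 : t (1:ℤ) = (3:ℤ) • t 3 := by
    have h := h1 1 3 (by norm_num) (by norm_num) (by decide)
    norm_num at h; exact h
  have O1_5 : t (1:ℤ) = (5:ℤ) • t 5 := by
    have h := h1 1 5 (by norm_num) (by norm_num) (by decide)
    norm_num at h; exact h
  have O1_7 : t (1:ℤ) = (7:ℤ) • t 7 := by
    have h := h1 1 7 (by norm_num) (by norm_num) (by decide)
    norm_num at h; exact h
  have O1_9 : t (1:ℤ) = (9:ℤ) • t 9 := by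
    have h := h1 1 9 (by norm_num) (by norm_num) (by decide)
    norm_num at h; exact h
  have O2_3 : t (2:ℤ) = (3:ℤ) • t 6 := by
    have h := h1 2 3 (by norm_num) (by norm_num) (by decide)
    norm_num at h; exact h
  have O2_5 : t (2:ℤ) = (5:ℤ) • t 10 := by
    have h := h1 2 5 (by norm_num) (by norm_num) (by decide)
    norm_num at h; exact h
  have O2_7 : t (2:ℤ) = (7:ℤ) • t 14 := by
    have h := h1 2 7 (by norm_num) (by norm_num) (by decide)
    norm_num at h; exact h
  have O3_3 : t (3:ℤ) = (3:ℤ) • t 9 := by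
    have h := h1 3 3 (by norm_num) (by norm_num) (by decide)
    norm_num at h; exact h
  have O3_5 : t (3:ℤ) = (5:ℤ) • t 15 := by
    have h := h1 3 5 (by norm_num) (by norm_num) (by decide)
    norm_num at h; exact h
  have O4_3 : t (4:ℤ) = (3:ℤ) • t 12 := by
    have h := h1 4 3 (by norm_num) (by norm_num) (by decide)
    norm_num at h; exact h
  have O5_3 : t (5:ℤ) = (3:ℤ) • t 15 := by
    have h := h1 5 3 (by norm_num) (by norm_num) (by decide)
    norm_num at h; exact h
  have E0 := h3 0 (by norm_num)
  norm_num at E0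
  have E1 := h3 1 (by norm_num)
  norm_num at E1
  have E2 := h3 2 (by norm_num)
  norm_num at E2
  have E3 := h3 3 (by norm_num)
  norm_num at E3
  have E4 := h3 4 (by norm_num)
  norm_num at E4
  have E5 := h3 5 (by norm_num)
  norm_num at E5
  have E6 := h3 6 (by norm_num)
  norm_num at E6
  have E7 := h3 7 (by norm_num)
  norm_num at E7
  have E8 := h3 8 (by norm_num)
  norm_num at E8
  have E9 := h3 9 (by norm_num)
  norm_num at E9
  have key1 : (16:ℤ) • t 1 = 0 := by
    linear_combination (norm := module) (11:ℤ) • h2 + (39:ℤ) • N1 + (2:ℤ) • N2 + (-2:ℤ) • N3 + (3:ℤ) • N4 + (-4:ℤ) • N5 + (-1:ℤ) • N6 + (-19:ℤ) • O1_3 + (56:ℤ) • O1_5 + (-9:ℤ) • O1_7 + (-7:ℤ) • O1_9 + (-4:ℤ) • O1_11 + (26:ℤ) • O2_3 + (-2:ℤ) • O2_5 + (-1:ℤ) • O2_7 + (3:ℤ) • O3_3 + (8:ℤ) • O3_5 + (-4:ℤ) • O4_3 + (-12:ℤ) • O5_3 + (1:ℤ) • E0 + (4:ℤ) • E1 + (-3:ℤ)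 • E2 + (1:ℤ) • E3 + (-7:ℤ) • E4 + (-41:ℤ) • E5 + (-16:ℤ) • E6 + (-7:ℤ) • E8 + (4:ℤ) • E9
  have key2 : (16:ℤ) • t 2 = 0 := by
    linear_combination (norm := module) (1:ℤ) • h2 + (-2:ℤ) • N1 + (-3:ℤ) • N2 + (-1:ℤ) • N3 + (-1:ℤ) • N5 + (-7:ℤ) • O1_3 + (3:ℤ) • O1_5 + (-33:ℤ) • O1_7 + (20:ℤ) • O1_9 + (-2:ℤ) • O1_11 + (2:ℤ) • O1_13 + (-2:ℤ) • O1_15 + (13:ℤ) • O2_3 + (1:ℤ) • O2_5 + (9:ℤ) • O3_3 + (2:ℤ) • O3_5 + (-9:ℤ) • O4_3 + (-1:ℤ) • O5_3 + (1:ℤ) • E1 + (1:ℤ) • E3 + (2:ℤ) • E4 + (1:ℤ) • E5 + (-4:ℤ) • E6 + (26:ℤ) • E7 + (-23:ℤ) • E9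
  have haux : (fun a : A => (105:ℤ) • a) (t 4) = (fun a : A => (105:ℤ) • a) ((4:ℤ) • t 1 + t 0) := by
    show (105:ℤ) • t 4 = (105:ℤ) • ((4:ℤ) • t 1 + t 0)
    linear_combination (norm := module) (-34:ℤ) • h2 + (-56:ℤ) • N1 + (-51:ℤ) • N2 + (-12:ℤ) • N3 + (9:ℤ) • N4 + (-47:ℤ) • N5 + (-11:ℤ) • N6 + (-2:ℤ) • O1_3 + (-22:ℤ) • O1_5 + (-2:ℤ) • O1_7 + (53:ℤ) • O1_9 + (-6:ℤ) • O1_11 + (-5:ℤ) • O1_15 + (-56:ℤ) • O2_3 + (-16:ℤ) • O2_5 + (-1:ℤ) • O2_7 + (19:ℤ) • O3_3 + (-18:ℤ) • O4_3 + (3:ℤ) • O5_3 + (11:ℤ) • E0 + (47:ℤ) • E1 + (-9:ℤ) • E2 + (1:ℤ) • E3 + (-7:ℤ) • E4 + (7:ℤ) • E5 + (12:ℤ) • E6 + (-7:ℤ) • E8 + (-66:ℤ) • E9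
  exact ⟨(hloc 105 (by decide)).1 haux, key2⟩
end

section
/- Let A be a module over ℤ_(2) and t : ℤ → A a function satisfying: (i) t j = k • t (k*j) for all nonzero j and all odd nonzero k; (ii) 2 • t 0 = 0; (iii) for every i ≥ 0, 2•t(2+i) + t(4+i) + t(6+i) + 2•t(-2+i) + t(-4+i) + t(-6+i) = 8 • t i. Then 8 • t 1 = 0. -/
theorem stmt_5 (A : Type*) [AddCommGroup A]
    (hloc : ∀ k : ℤ, Odd k → Function.Bijective (fun a : A => k • a))
    (t : ℤ → A)
    (h1 : ∀ j k : ℤ, j ≠ 0 → k ≠ 0 → Odd k → t j = k • t (k * j))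
    (h2 : (2 : ℤ) • t 0 = 0)
    (h3 : ∀ i : ℤ, 0 ≤ i → (2:ℤ)•t (2+i) + t (4+i) + t (6+i) + (2:ℤ)•t (-2+i) + t (-4+i) + t (-6+i) = (8:ℤ) • t i) :
    (8:ℤ) • t 1 = 0 := by
  have e3 : t 1 = (3:ℤ) • t 3 := by simpa using h1 1 3 (by norm_num) (by norm_num) (by decide)
  have e5 : t 1 = (5:ℤ) • t 5 := by simpa using h1 1 5 (by norm_num) (by norm_num) (by decide)
  have e7 : t 1 = (7:ℤ) • t 7 := by simpa using h1 1 7 (by norm_num) (by norm_num) (by decide)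
  have n1 : t (-1) = -t 1 := by
    have := h1 1 (-1) (by norm_num) (by norm_num) (by decide)
    simp only [neg_one_mul, mul_one] at this
    rw [this]; simp
  have n3 : t (-3) = -t 3 := by
    have := h1 3 (-1) (by norm_num) (by norm_num) (by decide)
    simp only [neg_one_mul] at this
    rw [this]; simp
  have n5 : t (-5) = -t 5 := by
    have := h1 5 (-1) (by norm_num) (by norm_num) (by decide)
    simp only [neg_one_mul] at this
    rw [this]; simp
  have key := h3 1 (by norm_num)
  norm_num [n1, n3, n5] at key
  -- key : relation among t3,t5,t7,t1
  have key2 : t 3 + t 7 = (10:ℤ) • t 1 := by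
    have h : (2:ℤ)•t 3 + t 5 + t 7 + -((2:ℤ)•t 1) + (-t 3) + (-t 5) = (8:ℤ) • t 1 := key
    rw [show ((10:ℤ) • t 1 : A) = (8:ℤ) • t 1 + (2:ℤ) • t 1 by
      rw [← add_smul]; norm_num]
    rw [← h]; abel
  have key3 : (21:ℤ) • (t 3 + t 7) = (210:ℤ) • t 1 := by
    rw [key2, smul_smul]; norm_num
  have l3 : (21:ℤ) • t 3 = (7:ℤ) • t 1 := by
    rw [e3, smul_smul]; norm_num
  have l7 : (21:ℤ) • t 7 = (3:ℤ) • t 1 := by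
    rw [e7, smul_smul]; norm_num
  have key4 : (10:ℤ) • t 1 = (210:ℤ) • t 1 := by
    rw [← key3, smul_add, l3, l7, ← add_smul]; norm_num
  have key5 : (25:ℤ) • ((8:ℤ) • t 1) = 0 := by
    rw [smul_smul]
    norm_num
    have : (200:ℤ) • t 1 = (210:ℤ) • t 1 - (10:ℤ) • t 1 := by
      rw [← sub_smul]; norm_num
    rw [this, ← key4, sub_self]
  have hinj := (hloc 25 (by decide)).injective
  have : (25:ℤ) • ((8:ℤ) • t 1) = (25:ℤ) • (0:A) := by simpa using key5
  exact hinj this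
end

section
/- Let A be a module over ℤ_(3) and t : ℤ → A a function satisfying: (i) t j = k • t (k*j) for all nonzero j and all nonzero k coprime to 3; (ii) 2 • t 0 = 0; (iii) for every i ≥ 0, 21•t(1+i) + 7•t(3+i) + 21•t(-1+i) + 7•t(-3+i) = 52 • t i. Then t 1 = 0. -/
theorem stmt_13 (A : Type*) [AddCommGroup A]
    (hloc : ∀ k : ℤ, IsCoprime k 3 → Function.Bijective (fun a : A => k • a))
    (t : ℤ → A)
    (h1 : ∀ j k : ℤ, j ≠ 0 → k ≠ 0 → IsCoprime k 3 → t j = k • t (k * j))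
    (h2 : (2 : ℤ) • t 0 = 0)
    (h3 : ∀ i : ℤ, 0 ≤ i → (21:ℤ)•t (1+i) + (7:ℤ)•t (3+i) + (21:ℤ)•t (-1+i) + (7:ℤ)•t (-3+i) = (52:ℤ) • t i) :
    t 1 = 0 := by
  have c2 : IsCoprime (2:ℤ) 3 := by rw [Int.isCoprime_iff_gcd_eq_one]; decide
  have c4 : IsCoprime (4:ℤ) 3 := by rw [Int.isCoprime_iff_gcd_eq_one]; decide
  have cm1 : IsCoprime (-1:ℤ) 3 := by rw [Int.isCoprime_iff_gcd_eq_one]; decide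
  have c173 : IsCoprime (173:ℤ) 3 := by rw [Int.isCoprime_iff_gcd_eq_one]; decide
  have ht0 : t 0 = 0 := (hloc 2 c2).injective (by simpa using h2)
  have e2 : t 1 = (2:ℤ) • t 2 := by simpa using h1 1 2 (by norm_num) (by norm_num) c2
  have e4 : t 1 = (4:ℤ) • t 4 := by simpa using h1 1 4 (by norm_num) (by norm_num) c4
  have em2 : t (-2) = - t 2 := by
    have := h1 2 (-1) (by norm_num) (by norm_num) cm1
    simp only [neg_one_smul] at this
    have : t ((-1)*2) = - t 2 := by rw [this]; simp
    simpa using this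
  have h := h3 1 (by norm_num)
  norm_num [ht0, em2] at h
  -- h : 21 • t 2 + 7 • t 4 - 7 • t 2 = 52 • t 1  (or similar)
  have key : (173:ℤ) • t 1 = 0 := by
    have h4 := congrArg (fun a : A => (4:ℤ) • a) h
    simp only [smul_add, smul_sub, smul_neg, smul_smul] at h4
    have s2 : (28:ℤ) • t 1 = (56:ℤ) • t 2 := by rw [e2, smul_smul]; norm_num
    have s4 : (7:ℤ) • t 1 = (28:ℤ) • t 4 := by rw [e4, smul_smul]; norm_num
    have goal : (208:ℤ) • t 1 = (35:ℤ) • t 1 := by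
      linear_combination (norm := module) -h4 - s2 - s4
    have : ((208:ℤ) - 35) • t 1 = 0 := by rw [sub_smul, goal, sub_self]
    norm_num at this
    exact this
  exact (hloc 173 c173).injective (by simpa using key)
end
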